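/- arXiv:2510.10527 — 4 statements merged into one kernel-verified Lean document; each statement's English description precedes it below -/
import Mathlib

section
/- Let T ∈ {0,1}, ρ ∈ (0,1) and y, m1, m0 be real numbers. Define w = (T − ρ)/(ρ(1 − ρ)) and b = (1 − ρ)·m1 + ρ·m0. Then y·w − b·w = T·(y − m1)/ρ − (1 − T)·(y − m0)/(1 − ρ) + m1 − m0. (That is, the denoised IPW transformation with the optimal denoising function coincides pointwise with the augmented IPW / doubly robust transformation.) -/
/-- The denoised IPW transformation with the optimal denoising function
`b = (1 - ρ)·m1 + ρ·m0` coincides pointwise with the augmented IPW (doubly robust)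
transformation. -/
theorem denoised_ipw_eq_aipw (T ρ y m1 m0 : ℝ) (hT : T = 0 ∨ T = 1)
    (hρ0 : 0 < ρ) (hρ1 : ρ < 1) :
    y * ((T - ρ) / (ρ * (1 - ρ))) - ((1 - ρ) * m1 + ρ * m0) * ((T - ρ) / (ρ * (1 - ρ)))
      = T * (y - m1) / ρ - (1 - T) * (y - m0) / (1 - ρ) + m1 - m0 := by
  have h1 : ρ ≠ 0 := ne_of_gt hρ0
  have h2 : (1 - ρ) ≠ 0 := by linarith
  rcases hT with h | h <;> subst h <;> field_simp <;> ring
end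

section
/- Under the RCT setup with overlap and unconfoundedness, if Y·W is integrable then almost surely E[Y·W | X] = E[Y(1) − Y(0) | X]; that is, the conditional expectation of the IPW-transformed outcome given the covariates identifies the conditional average treatment effect τ(X). -/
open MeasureTheory ProbabilityTheory MeasurableSpace Set

lemma condIndepFun_ae_indepFun
    {Ω : Type} {m : MeasurableSpace Ω} {mΩ : MeasurableSpace Ω}
    [StandardBorelSpace Ω] [Nonempty Ω]
    {μ : Measure Ω} [IsProbabilityMeasure μ] (hm : m ≤ mΩ)
    {f g : Ω → ℝ} (hf : Measurable f) (hg : Measurable g)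
    (hindep : CondIndepFun m hm f g μ) :
    ∀ᵐ ω ∂μ, IndepFun f g (condExpKernel μ m ω) := by
  set κ := condExpKernel μ m with hκ
  have h_sets : ∀ (q r : ℚ), ∀ᵐ ω ∂μ,
      κ ω (f ⁻¹' Iic (q : ℝ) ∩ g ⁻¹' Iic (r : ℝ))
        = κ ω (f ⁻¹' Iic (q : ℝ)) * κ ω (g ⁻¹' Iic (r : ℝ)) := by
    intro q r
    exact ae_of_ae_trim hm
      (hindep _ _ ⟨Iic (q : ℝ), measurableSet_Iic, rfl⟩ ⟨Iic (r : ℝ), measurableSet_Iic, rfl⟩)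
  have h_all : ∀ᵐ ω ∂μ, ∀ q r : ℚ,
      κ ω (f ⁻¹' Iic (q : ℝ) ∩ g ⁻¹' Iic (r : ℝ))
        = κ ω (f ⁻¹' Iic (q : ℝ)) * κ ω (g ⁻¹' Iic (r : ℝ)) := by
    rw [MeasureTheory.ae_all_iff]
    intro q
    rw [MeasureTheory.ae_all_iff]
    exact h_sets q
  filter_upwards [h_all] with ω hω
  have hreal : Real.measurableSpace = borel ℝ := BorelSpace.measurable_eq
  have hIndep : Indep (MeasurableSpace.comap f inferInstance)
      (MeasurableSpace.comap g inferInstance) (κ ω) := by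
    apply IndepSets.indep (hf.comap_le) (hg.comap_le)
      ((Real.isPiSystem_Iic_rat).comap f) ((Real.isPiSystem_Iic_rat).comap g)
    · rw [hreal, Real.borel_eq_generateFrom_Iic_rat, MeasurableSpace.comap_generateFrom]; rfl
    · rw [hreal, Real.borel_eq_generateFrom_Iic_rat, MeasurableSpace.comap_generateFrom]; rfl
    · rw [IndepSets_iff]
      rintro _ _ ⟨s, hs, rfl⟩ ⟨t, ht, rfl⟩
      simp only [mem_iUnion, mem_singleton_iff] at hs ht
      obtain ⟨q, rfl⟩ := hs
      obtain ⟨r, rfl⟩ := ht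
      exact hω q r
  rw [indepFun_iff_measure_inter_preimage_eq_mul]
  intro s t hs ht
  exact (Indep_iff _ _ _).1 hIndep _ _ ⟨s, hs, rfl⟩ ⟨t, ht, rfl⟩

lemma condexp_mul_of_condIndepFun
    {Ω : Type} {m : MeasurableSpace Ω} {mΩ : MeasurableSpace Ω}
    [StandardBorelSpace Ω] [Nonempty Ω]
    {μ : Measure Ω} [IsProbabilityMeasure μ] (hm : m ≤ mΩ)
    {f g : Ω → ℝ} (hf : Measurable f) (hg : Measurable g)
    (hindep : CondIndepFun m hm f g μ)
    (hfi : Integrable f μ) (hgi : Integrable g μ)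
    (hfgi : Integrable (fun ω => f ω * g ω) μ) :
    μ[fun ω => f ω * g ω | m] =ᵐ[μ] fun ω => (μ[f|m]) ω * (μ[g|m]) ω := by
  have h1 := condExp_ae_eq_integral_condExpKernel hm hfgi
  have h2 := condExp_ae_eq_integral_condExpKernel hm hfi
  have h3 := condExp_ae_eq_integral_condExpKernel hm hgi
  filter_upwards [h1, h2, h3, condIndepFun_ae_indepFun hm hf hg hindep] with ω e1 e2 e3 hind
  rw [e1, e2, e3]
  exact IndepFun.integral_mul_eq_mul_integral hind hf.aestronglyMeasurable hg.aestronglyMeasurable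

/-- Under the RCT setup with overlap and unconfoundedness, the conditional expectation of
the IPW-transformed outcome `Y·W` given the covariates `X` identifies the conditional
average treatment effect `E[Y(1) − Y(0) | X]`, almost surely. -/
theorem ipw_identifies_cate
    {Ω : Type} [mΩ : MeasurableSpace Ω] [StandardBorelSpace Ω] [Nonempty Ω]
    (μ : Measure Ω) [IsProbabilityMeasure μ]
    {d : ℕ} (X : Ω → (Fin d → ℝ)) (Y1 Y0 T : Ω → ℝ)
    (hX : Measurable X) (hY1 : Measurable Y1) (hY0 : Measurable Y0) (hT : Measurable T)
    -- binary treatment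
    (hT01 : ∀ ω, T ω = 0 ∨ T ω = 1)
    -- known propensity score with overlap (Assumption 2)
    (ρ : (Fin d → ℝ) → ℝ) (hρ : Measurable ρ)
    (ξ : ℝ) (hξ : 0 < ξ) (hover : ∀ x, ξ < ρ x ∧ ρ x < 1 - ξ)
    (hprop : μ[T | MeasurableSpace.comap X inferInstance] =ᵐ[μ] fun ω => ρ (X ω))
    -- unconfoundedness (Assumption 1)
    (hunconf : CondIndepFun (MeasurableSpace.comap X inferInstance) hX.comap_le
      T (fun ω => (Y1 ω, Y0 ω)) μ)
    -- integrable potential outcomes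
    (hY1int : Integrable Y1 μ) (hY0int : Integrable Y0 μ)
    -- observed outcome and IPW weight
    (Y : Ω → ℝ) (hY : Y = fun ω => T ω * Y1 ω + (1 - T ω) * Y0 ω)
    (W : Ω → ℝ)
    (hW : W = fun ω => (T ω - ρ (X ω)) / (ρ (X ω) * (1 - ρ (X ω))))
    (hYWint : Integrable (fun ω => Y ω * W ω) μ) :
    μ[fun ω => Y ω * W ω | MeasurableSpace.comap X inferInstance]
      =ᵐ[μ] μ[fun ω => Y1 ω - Y0 ω | MeasurableSpace.comap X inferInstance] := by
  set m := MeasurableSpace.comap X inferInstance with hmdef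
  have hm : m ≤ mΩ := hX.comap_le
  have hXm : Measurable[m] X := Measurable.of_comap_le le_rfl
  have hρ0 : ∀ ω, ρ (X ω) ≠ 0 := fun ω => (hξ.trans (hover (X ω)).1).ne'
  have hρ1 : ∀ ω, 1 - ρ (X ω) ≠ 0 := fun ω => by
    have h := (hover (X ω)).2; intro hc; linarith
  -- bounds on T
  have hTbd : ∀ ω, ‖T ω‖ ≤ 1 := by intro ω; rcases hT01 ω with h | h <;> simp [h]
  have h1Tbd : ∀ ω, ‖1 - T ω‖ ≤ 1 := by intro ω; rcases hT01 ω with h | h <;> simp [h]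
  have hTint : Integrable T μ :=
    (integrable_const (1 : ℝ)).mono' hT.aestronglyMeasurable (Filter.Eventually.of_forall hTbd)
  have h1mTint : Integrable (fun ω => 1 - T ω) μ :=
    (integrable_const (1 : ℝ)).mono' (measurable_const.sub hT).aestronglyMeasurable
      (Filter.Eventually.of_forall h1Tbd)
  -- integrability of the pieces
  have hg1i : Integrable (fun ω => T ω * Y1 ω) μ :=
    hY1int.bdd_mul hT.aestronglyMeasurable (Filter.Eventually.of_forall hTbd)
  have hg0i : Integrable (fun ω => (1 - T ω) * Y0 ω) μ :=
    hY0int.bdd_mul (measurable_const.sub hT).aestronglyMeasurable (Filter.Eventually.of_forall h1Tbd)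
  have h1i : Integrable (fun ω => (ρ (X ω))⁻¹ * (T ω * Y1 ω)) μ := by
    have heq : (fun ω => (ρ (X ω))⁻¹ * (T ω * Y1 ω)) = fun ω => T ω * (Y ω * W ω) := by
      funext ω
      simp only [hY, hW]
      rcases hT01 ω with h | h <;> rw [h] <;> field_simp [hρ0 ω, hρ1 ω] <;> ring
    rw [heq]
    exact hYWint.bdd_mul hT.aestronglyMeasurable (Filter.Eventually.of_forall hTbd)
  have h0i : Integrable (fun ω => (1 - ρ (X ω))⁻¹ * ((1 - T ω) * Y0 ω)) μ := by
    have heq : (fun ω => (1 - ρ (X ω))⁻¹ * ((1 - T ω) * Y0 ω))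
        = fun ω => -((1 - T ω) * (Y ω * W ω)) := by
      funext ω
      simp only [hY, hW]
      rcases hT01 ω with h | h <;> rw [h] <;> field_simp [hρ0 ω, hρ1 ω] <;> ring
    rw [heq]
    exact (hYWint.bdd_mul (measurable_const.sub hT).aestronglyMeasurable (Filter.Eventually.of_forall h1Tbd)).neg
  -- pointwise decomposition of Y·W
  have hYW : (fun ω => Y ω * W ω)
      = (fun ω => (ρ (X ω))⁻¹ * (T ω * Y1 ω))
        - (fun ω => (1 - ρ (X ω))⁻¹ * ((1 - T ω) * Y0 ω)) := by
    funext ω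
    simp only [hY, hW, Pi.sub_apply]
    rcases hT01 ω with h | h <;> rw [h] <;> field_simp [hρ0 ω, hρ1 ω] <;> ring
  -- conditional independence of the factors
  have hindep1 : CondIndepFun m hm T Y1 μ := by
    have h := hunconf.comp measurable_id measurable_fst
    exact h
  have hindep0 : CondIndepFun m hm (fun ω => 1 - T ω) Y0 μ := by
    have h := hunconf.comp (φ := fun t : ℝ => 1 - t) (ψ := Prod.snd) (measurable_const.sub measurable_id) measurable_snd
    exact h
  -- product rules
  have e2 : μ[fun ω => T ω * Y1 ω | m] =ᵐ[μ] fun ω => (μ[T|m]) ω * (μ[Y1|m]) ω :=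
    condexp_mul_of_condIndepFun hm hT hY1 hindep1 hTint hY1int hg1i
  have e2' : μ[fun ω => (1 - T ω) * Y0 ω | m]
      =ᵐ[μ] fun ω => (μ[fun ω => 1 - T ω|m]) ω * (μ[Y0|m]) ω :=
    condexp_mul_of_condIndepFun hm (measurable_const.sub hT) hY0 hindep0 h1mTint hY0int hg0i
  -- pulling out the m-measurable factors
  have hsm1 : StronglyMeasurable[m] (fun ω => (ρ (X ω))⁻¹) :=
    ((hρ.comp hXm).inv).stronglyMeasurable
  have hsm0 : StronglyMeasurable[m] (fun ω => (1 - ρ (X ω))⁻¹) :=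
    ((measurable_const.sub (hρ.comp hXm)).inv).stronglyMeasurable
  have e1 : μ[fun ω => (ρ (X ω))⁻¹ * (T ω * Y1 ω) | m]
      =ᵐ[μ] (fun ω => (ρ (X ω))⁻¹) * μ[fun ω => T ω * Y1 ω | m] :=
    condExp_mul_of_stronglyMeasurable_left hsm1 h1i hg1i
  have e0 : μ[fun ω => (1 - ρ (X ω))⁻¹ * ((1 - T ω) * Y0 ω) | m]
      =ᵐ[μ] (fun ω => (1 - ρ (X ω))⁻¹) * μ[fun ω => (1 - T ω) * Y0 ω | m] :=
    condExp_mul_of_stronglyMeasurable_left hsm0 h0i hg0i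
  -- conditional expectation of 1 - T
  have h1mT : μ[fun ω => 1 - T ω | m] =ᵐ[μ] fun ω => 1 - ρ (X ω) := by
    have h : μ[(fun _ => (1 : ℝ)) - T | m] =ᵐ[μ] μ[fun _ => (1 : ℝ)|m] - μ[T|m] :=
      condExp_sub (integrable_const 1) hTint _
    filter_upwards [h, hprop] with ω h1 h2
    have : (μ[fun _ => (1 : ℝ)|m] - μ[T|m]) ω = 1 - ρ (X ω) := by
      rw [Pi.sub_apply, condExp_const hm, h2]
    exact h1.trans this
  -- decompose the conditional expectation
  have hsub : μ[fun ω => Y ω * W ω | m]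
      =ᵐ[μ] μ[fun ω => (ρ (X ω))⁻¹ * (T ω * Y1 ω)|m]
        - μ[fun ω => (1 - ρ (X ω))⁻¹ * ((1 - T ω) * Y0 ω)|m] := by
    rw [hYW]
    exact condExp_sub h1i h0i _
  have hRHS : μ[fun ω => Y1 ω - Y0 ω | m] =ᵐ[μ] μ[Y1|m] - μ[Y0|m] :=
    condExp_sub hY1int hY0int _
  -- combine everything
  filter_upwards [hsub, e1, e0, e2, e2', hprop, h1mT, hRHS] with ω w1 w2 w3 w4 w5 w6 w7 w8
  rw [w1, Pi.sub_apply, w2, w3, Pi.mul_apply, Pi.mul_apply, w4, w5, w6, w7, w8, Pi.sub_apply]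
  field_simp [hρ0 ω, hρ1 ω]
  try ring
end

section
/- (Proposition 1, optimal denoising function.) Under the RCT setup with overlap and unconfoundedness, define B*(x) = (1 − p(x))·μ1(x) + p(x)·μ0(x), where μ1(x) = E[Y(1) | X = x] and μ0(x) = E[Y(0) | X = x]. Then B* solves min over measurable B of E[(Y·W − B(X)·W)²]: for every measurable B: ℝ^p → ℝ such that B(X)·W is square-integrable, E[(Y·W − B*(X)·W)²] ≤ E[(Y·W − B(X)·W)²]. -/
open MeasureTheory ProbabilityTheory

lemma integrable_mul_of_sq {Ω : Type} [MeasurableSpace Ω] {μ : Measure Ω} {f g : Ω → ℝ}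
    (hf : AEStronglyMeasurable f μ) (hg : AEStronglyMeasurable g μ)
    (hf2 : Integrable (fun ω => f ω ^ 2) μ) (hg2 : Integrable (fun ω => g ω ^ 2) μ) :
    Integrable (fun ω => f ω * g ω) μ := by
  refine Integrable.mono' ((hf2.add hg2).div_const 2) (hf.mul hg) (ae_of_all _ fun ω => ?_)
  simp only [Real.norm_eq_abs, Pi.add_apply]
  rw [abs_mul]
  nlinarith [sq_nonneg (|f ω| - |g ω|), sq_abs (f ω), sq_abs (g ω), abs_nonneg (f ω),
    abs_nonneg (g ω)]

lemma integrable_of_sq {Ω : Type} [MeasurableSpace Ω] {μ : Measure Ω} [IsFiniteMeasure μ]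
    {f : Ω → ℝ} (hf : AEStronglyMeasurable f μ)
    (hf2 : Integrable (fun ω => f ω ^ 2) μ) : Integrable f μ := by
  refine Integrable.mono' ((hf2.add (integrable_const 1)).div_const 2) hf
    (ae_of_all _ fun ω => ?_)
  simp only [Real.norm_eq_abs, Pi.add_apply]
  nlinarith [sq_nonneg (|f ω| - 1), sq_abs (f ω), abs_nonneg (f ω)]


lemma condexp_mul_binary {Ω : Type} {m : MeasurableSpace Ω}
    [mΩ : MeasurableSpace Ω] [StandardBorelSpace Ω] [Nonempty Ω]
    (μ : Measure Ω) [IsProbabilityMeasure μ] (hm : m ≤ mΩ)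
    {T Z : Ω → ℝ} (hT : Measurable T) (hZ : Measurable Z)
    (hT01 : ∀ ω, T ω = 0 ∨ T ω = 1) (hZint : Integrable Z μ)
    (hind : CondIndepFun m hm T Z μ) :
    (μ[fun ω => T ω * Z ω|m]) =ᵐ[μ] fun ω => (μ[T|m]) ω * (μ[Z|m]) ω := by
  have hTabs : ∀ ω, |T ω| ≤ 1 := fun ω => by rcases hT01 ω with h | h <;> simp [h]
  have hTint : Integrable T μ :=
    Integrable.mono' (integrable_const 1) hT.aestronglyMeasurable
      (ae_of_all _ fun ω => by rw [Real.norm_eq_abs]; exact hTabs ω)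
  -- bound on conditional expectation of T
  have hcb : ∀ᵐ ω ∂μ, |(μ[T|m]) ω| ≤ 1 := by
    have h0 : μ[(fun _ => (0:ℝ))|m] ≤ᵐ[μ] μ[T|m] :=
      condExp_mono (integrable_const 0) hTint
        (ae_of_all _ fun ω => by rcases hT01 ω with h | h <;> simp [h])
    have h1 : μ[T|m] ≤ᵐ[μ] μ[(fun _ => (1:ℝ))|m] :=
      condExp_mono hTint (integrable_const 1)
        (ae_of_all _ fun ω => by rcases hT01 ω with h | h <;> simp [h])
    rw [condExp_const hm] at h0
    rw [condExp_const hm] at h1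
    filter_upwards [h0, h1] with ω hω0 hω1
    rw [abs_le]
    constructor
    · have : (0:ℝ) ≤ (μ[T|m]) ω := by simpa using hω0
      linarith
    · simpa using hω1
  set A : Set Ω := T ⁻¹' {1} with hAdef
  have hA : MeasurableSet A := hT (measurableSet_singleton 1)
  have hTA : T = A.indicator fun _ => (1:ℝ) := by
    funext ω
    rcases hT01 ω with h | h <;>
      simp [Set.indicator_apply, hAdef, Set.mem_preimage, h]
  have hindmul : ∀ {B : Set ℝ}, MeasurableSet B →
      (μ⟦A ∩ Z ⁻¹' B | m⟧) =ᵐ[μ] fun ω => (μ⟦A|m⟧) ω * (μ⟦Z ⁻¹' B|m⟧) ω :=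
    fun {B} hB => (condIndepFun_iff_condExp_inter_preimage_eq_mul hT hZ).mp hind {1} B
      (measurableSet_singleton 1) hB
  have hcA : (μ⟦A|m⟧) = μ[T|m] := by rw [hTA]
  -- the indicator-level set integral identity
  have claim_ind : ∀ {B : Set ℝ}, MeasurableSet B → ∀ {s : Set Ω}, MeasurableSet[m] s →
      ∫ ω in s, T ω * (Z ⁻¹' B).indicator (fun _ => (1:ℝ)) ω ∂μ
        = ∫ ω in s, (μ[T|m]) ω * (Z ⁻¹' B).indicator (fun _ => (1:ℝ)) ω ∂μ := by
    intro B hB s hs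
    have hZB : MeasurableSet (Z ⁻¹' B) := hZ hB
    have hintB : Integrable ((Z ⁻¹' B).indicator fun _ => (1:ℝ)) μ :=
      (integrable_const 1).indicator hZB
    have e1 : (fun ω => T ω * (Z ⁻¹' B).indicator (fun _ => (1:ℝ)) ω)
        = (A ∩ Z ⁻¹' B).indicator fun _ => (1:ℝ) := by
      funext ω
      by_cases hb : ω ∈ Z ⁻¹' B <;> rcases hT01 ω with h | h <;>
        simp [Set.indicator_apply, hAdef, Set.mem_preimage, h, hb]
    have hintAB : Integrable ((A ∩ Z ⁻¹' B).indicator fun _ => (1:ℝ)) μ :=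
      (integrable_const 1).indicator (hA.inter hZB)
    have lhs_eq : ∫ ω in s, T ω * (Z ⁻¹' B).indicator (fun _ => (1:ℝ)) ω ∂μ
        = ∫ ω in s, (μ[T|m]) ω * (μ⟦Z ⁻¹' B|m⟧) ω ∂μ := by
      rw [show (fun ω => T ω * (Z ⁻¹' B).indicator (fun _ => (1:ℝ)) ω)
          = (A ∩ Z ⁻¹' B).indicator (fun _ => (1:ℝ)) from e1]
      rw [← setIntegral_condExp hm hintAB hs]
      refine integral_congr_ae (ae_restrict_of_ae ?_)
      filter_upwards [hindmul hB] with ω hω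
      rw [hω, hcA]
    have hintcB : Integrable ((μ[T|m]) * ((Z ⁻¹' B).indicator fun _ => (1:ℝ))) μ := by
      refine Integrable.mono' (integrable_const 1)
        (((stronglyMeasurable_condExp.mono hm).aestronglyMeasurable).mul
          ((measurable_const.indicator hZB).aestronglyMeasurable)) ?_
      filter_upwards [hcb] with ω hω
      rw [Pi.mul_apply, Real.norm_eq_abs, abs_mul]
      calc |(μ[T|m]) ω| * |(Z ⁻¹' B).indicator (fun _ => (1:ℝ)) ω| ≤ 1 * 1 := by
            refine mul_le_mul hω ?_ (abs_nonneg _) zero_le_one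
            by_cases hb : ω ∈ Z ⁻¹' B <;> simp [Set.indicator_apply, hb]
        _ = 1 := one_mul 1
    have hpull : μ[(μ[T|m]) * ((Z ⁻¹' B).indicator fun _ => (1:ℝ))|m]
        =ᵐ[μ] (μ[T|m]) * μ[(Z ⁻¹' B).indicator fun _ => (1:ℝ)|m] :=
      condExp_mul_of_stronglyMeasurable_left stronglyMeasurable_condExp hintcB hintB
    have rhs_eq : ∫ ω in s, (μ[T|m]) ω * (Z ⁻¹' B).indicator (fun _ => (1:ℝ)) ω ∂μ
        = ∫ ω in s, (μ[T|m]) ω * (μ⟦Z ⁻¹' B|m⟧) ω ∂μ := by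
      rw [show (fun ω => (μ[T|m]) ω * (Z ⁻¹' B).indicator (fun _ => (1:ℝ)) ω)
          = (μ[T|m]) * ((Z ⁻¹' B).indicator fun _ => (1:ℝ)) from rfl]
      rw [← setIntegral_condExp hm hintcB hs]
      refine integral_congr_ae (ae_restrict_of_ae ?_)
      filter_upwards [hpull] with ω hω
      rw [hω]; rfl
    rw [lhs_eq, rhs_eq]
  -- main set-integral identity over m-measurable sets
  have claim_main : ∀ {s : Set Ω}, MeasurableSet[m] s →
      ∫ ω in s, (μ[T|m]) ω * Z ω ∂μ = ∫ ω in s, T ω * Z ω ∂μ := by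
    intro s hs
    have hsΩ : MeasurableSet s := hm _ hs
    set c : Ω → ℝ := μ[T|m] with hc
    have hcsm : AEStronglyMeasurable c μ :=
      (stronglyMeasurable_condExp.mono hm).aestronglyMeasurable
    set D : Ω → ℝ := fun ω => s.indicator (fun _ => (1:ℝ)) ω * (T ω - c ω) with hD
    have hDsm : AEStronglyMeasurable D μ :=
      ((measurable_const.indicator hsΩ).aestronglyMeasurable).mul
        (hT.aestronglyMeasurable.sub hcsm)
    have hDint : Integrable D μ := by
      refine Integrable.mono' (integrable_const 2) hDsm ?_
      filter_upwards [hcb] with ω hω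
      rw [Real.norm_eq_abs, hD, abs_mul]
      have h1 : |s.indicator (fun _ => (1:ℝ)) ω| ≤ 1 := by
        by_cases hb : ω ∈ s <;> simp [Set.indicator_apply, hb]
      have h2 : |T ω - c ω| ≤ 2 := by
        have := hTabs ω
        have := abs_sub (T ω) (c ω)
        calc |T ω - c ω| ≤ |T ω| + |c ω| := abs_sub _ _
          _ ≤ 1 + 1 := add_le_add (hTabs ω) hω
          _ = 2 := by norm_num
      calc |s.indicator (fun _ => (1:ℝ)) ω| * |T ω - c ω| ≤ 1 * 2 :=
            mul_le_mul h1 h2 (abs_nonneg _) zero_le_one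
        _ = 2 := by norm_num
    -- D has zero conditional expectation given Z
    have hD0 : (fun _ => (0:ℝ)) =ᵐ[μ] μ[D|MeasurableSpace.comap Z inferInstance] := by
      refine ae_eq_condExp_of_forall_setIntegral_eq hZ.comap_le hDint
        (fun t ht _ => (integrable_const (0:ℝ)).integrableOn)
        (fun t ht _ => ?_)
        (StronglyMeasurable.aestronglyMeasurable stronglyMeasurable_const)
      obtain ⟨B, hB, rfl⟩ := ht
      have hZB : MeasurableSet (Z ⁻¹' B) := hZ hB
      set iB : Ω → ℝ := (Z ⁻¹' B).indicator fun _ => (1:ℝ) with hiB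
      have hTB : Integrable (fun ω => T ω * iB ω) μ := by
        refine Integrable.mono' (integrable_const 1)
          (hT.aestronglyMeasurable.mul
            ((measurable_const.indicator hZB).aestronglyMeasurable)) ?_
        refine ae_of_all _ fun ω => ?_
        rw [Real.norm_eq_abs, abs_mul]
        have h1 : |iB ω| ≤ 1 := by by_cases hb : ω ∈ Z ⁻¹' B <;> simp [hiB, Set.indicator_apply, hb]
        calc |T ω| * |iB ω| ≤ 1 * 1 := mul_le_mul (hTabs ω) h1 (abs_nonneg _) zero_le_one
          _ = 1 := by norm_num
      have hcB : Integrable (fun ω => c ω * iB ω) μ := by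
        refine Integrable.mono' (integrable_const 1)
          (hcsm.mul ((measurable_const.indicator hZB).aestronglyMeasurable)) ?_
        filter_upwards [hcb] with ω hω
        rw [Real.norm_eq_abs, abs_mul]
        have h1 : |iB ω| ≤ 1 := by by_cases hb : ω ∈ Z ⁻¹' B <;> simp [hiB, Set.indicator_apply, hb]
        calc |c ω| * |iB ω| ≤ 1 * 1 := mul_le_mul hω h1 (abs_nonneg _) zero_le_one
          _ = 1 := by norm_num
      have e2 : (Z ⁻¹' B).indicator D = s.indicator (fun ω => T ω * iB ω - c ω * iB ω) := by
        funext ω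
        by_cases hb : ω ∈ Z ⁻¹' B <;> by_cases hss : ω ∈ s <;>
          simp [hD, hiB, Set.indicator_apply, hb, hss]
      have : ∫ ω in Z ⁻¹' B, D ω ∂μ
          = ∫ ω in s, (T ω * iB ω - c ω * iB ω) ∂μ := by
        rw [← integral_indicator hZB, e2, integral_indicator hsΩ]
      rw [this, integral_sub hTB.integrableOn hcB.integrableOn]
      have := claim_ind hB hs
      simp only [← hiB] at this
      rw [this]
      simp
    -- now compare the two set integrals using the tower property over σ(Z)
    have hZsm : StronglyMeasurable[MeasurableSpace.comap Z inferInstance] Z :=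
      (Measurable.stronglyMeasurable (measurable_iff_comap_le.mpr le_rfl))
    have hZD : Integrable (Z * D) μ := by
      refine Integrable.mono' ((hZint.norm.const_mul 2)) (hZint.aestronglyMeasurable.mul hDsm) ?_
      filter_upwards [hcb] with ω hω
      rw [Pi.mul_apply, Real.norm_eq_abs, abs_mul]
      have h1 : |s.indicator (fun _ => (1:ℝ)) ω| ≤ 1 := by
        by_cases hb : ω ∈ s <;> simp [Set.indicator_apply, hb]
      have h2 : |D ω| ≤ 2 := by
        rw [hD, abs_mul]
        have h3 : |T ω - c ω| ≤ 2 := by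
          calc |T ω - c ω| ≤ |T ω| + |c ω| := abs_sub _ _
            _ ≤ 1 + 1 := add_le_add (hTabs ω) hω
            _ = 2 := by norm_num
        calc |s.indicator (fun _ => (1:ℝ)) ω| * |T ω - c ω| ≤ 1 * 2 :=
              mul_le_mul h1 h3 (abs_nonneg _) zero_le_one
          _ = 2 := by norm_num
      calc |Z ω| * |D ω| ≤ |Z ω| * 2 := by
            exact mul_le_mul_of_nonneg_left h2 (abs_nonneg _)
        _ = 2 * ‖Z ω‖ := by rw [Real.norm_eq_abs]; ring
    have hpullZ : μ[Z * D|MeasurableSpace.comap Z inferInstance]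
        =ᵐ[μ] Z * μ[D|MeasurableSpace.comap Z inferInstance] :=
      condExp_mul_of_stronglyMeasurable_left hZsm hZD hDint
    have hZD0 : ∫ ω, Z ω * D ω ∂μ = 0 := by
      have h1 : ∫ ω, (Z * D) ω ∂μ = ∫ ω, (μ[Z * D|MeasurableSpace.comap Z inferInstance]) ω ∂μ :=
        (integral_condExp hZ.comap_le).symm
      have h2 : μ[Z * D|MeasurableSpace.comap Z inferInstance] =ᵐ[μ] fun _ => (0:ℝ) := by
        refine hpullZ.trans ?_
        filter_upwards [hD0.symm] with ω hω
        rw [Pi.mul_apply, hω]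
        simp
      have h3 : ∫ ω, (μ[Z * D|MeasurableSpace.comap Z inferInstance]) ω ∂μ = 0 := by
        rw [integral_congr_ae h2, integral_const]
        simp
      calc ∫ ω, Z ω * D ω ∂μ = ∫ ω, (Z * D) ω ∂μ := rfl
        _ = 0 := h1.trans h3
    -- split ∫ Z·D into the two set integrals
    have hTZ : Integrable (fun ω => T ω * Z ω) μ := by
      refine Integrable.mono' hZint.norm (hT.aestronglyMeasurable.mul hZint.aestronglyMeasurable) ?_
      refine ae_of_all _ fun ω => ?_
      rw [Real.norm_eq_abs, abs_mul, Real.norm_eq_abs]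
      calc |T ω| * |Z ω| ≤ 1 * |Z ω| := mul_le_mul_of_nonneg_right (hTabs ω) (abs_nonneg _)
        _ = |Z ω| := one_mul _
    have hcZ : Integrable (fun ω => c ω * Z ω) μ := by
      refine Integrable.mono' hZint.norm (hcsm.mul hZint.aestronglyMeasurable) ?_
      filter_upwards [hcb] with ω hω
      rw [Real.norm_eq_abs, abs_mul, Real.norm_eq_abs]
      calc |c ω| * |Z ω| ≤ 1 * |Z ω| := mul_le_mul_of_nonneg_right hω (abs_nonneg _)
        _ = |Z ω| := one_mul _
    have e3 : (fun ω => Z ω * D ω) = s.indicator (fun ω => T ω * Z ω - c ω * Z ω) := by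
      funext ω
      by_cases hss : ω ∈ s <;> simp [hD, Set.indicator_apply, hss] <;> ring
    have hsplit : ∫ ω, Z ω * D ω ∂μ
        = ∫ ω in s, T ω * Z ω ∂μ - ∫ ω in s, c ω * Z ω ∂μ := by
      rw [e3, integral_indicator hsΩ, integral_sub hTZ.integrableOn hcZ.integrableOn]
    rw [hsplit] at hZD0
    rw [hc] at hZD0 ⊢
    linarith
  -- final assembly via uniqueness of conditional expectation
  have hTZ : Integrable (fun ω => T ω * Z ω) μ := by
    refine Integrable.mono' hZint.norm (hT.aestronglyMeasurable.mul hZint.aestronglyMeasurable) ?_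
    refine ae_of_all _ fun ω => ?_
    rw [Real.norm_eq_abs, abs_mul, Real.norm_eq_abs]
    calc |T ω| * |Z ω| ≤ 1 * |Z ω| := mul_le_mul_of_nonneg_right (hTabs ω) (abs_nonneg _)
      _ = |Z ω| := one_mul _
  have hcZ : Integrable ((μ[T|m]) * Z) μ := by
    refine Integrable.mono' hZint.norm
      (((stronglyMeasurable_condExp.mono hm).aestronglyMeasurable).mul
        hZint.aestronglyMeasurable) ?_
    filter_upwards [hcb] with ω hω
    rw [Pi.mul_apply, Real.norm_eq_abs, abs_mul, Real.norm_eq_abs]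
    calc |(μ[T|m]) ω| * |Z ω| ≤ 1 * |Z ω| := mul_le_mul_of_nonneg_right hω (abs_nonneg _)
      _ = |Z ω| := one_mul _
  have hpull2 : μ[(μ[T|m]) * Z|m] =ᵐ[μ] (μ[T|m]) * μ[Z|m] :=
    condExp_mul_of_stronglyMeasurable_left stronglyMeasurable_condExp hcZ hZint
  have hgint : Integrable (fun ω => (μ[T|m]) ω * (μ[Z|m]) ω) μ := by
    refine Integrable.mono' (integrable_condExp : Integrable (μ[Z|m]) μ).norm
      (((stronglyMeasurable_condExp.mono hm).aestronglyMeasurable).mul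
        ((stronglyMeasurable_condExp.mono hm).aestronglyMeasurable)) ?_
    filter_upwards [hcb] with ω hω
    rw [Real.norm_eq_abs, abs_mul, Real.norm_eq_abs]
    calc |(μ[T|m]) ω| * |(μ[Z|m]) ω| ≤ 1 * |(μ[Z|m]) ω| :=
          mul_le_mul_of_nonneg_right hω (abs_nonneg _)
      _ = |(μ[Z|m]) ω| := one_mul _
  refine (ae_eq_condExp_of_forall_setIntegral_eq hm hTZ
    (fun s hs _ => hgint.integrableOn) (fun s hs _ => ?_)
    (StronglyMeasurable.aestronglyMeasurable
      (stronglyMeasurable_condExp.mul stronglyMeasurable_condExp))).symm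
  have e4 : ∫ ω in s, (μ[T|m]) ω * (μ[Z|m]) ω ∂μ = ∫ ω in s, ((μ[T|m]) * Z) ω ∂μ := by
    rw [← setIntegral_condExp hm hcZ hs]
    refine integral_congr_ae (ae_restrict_of_ae ?_)
    filter_upwards [hpull2] with ω hω
    rw [hω]; rfl
  rw [e4]
  exact claim_main hs

set_option maxHeartbeats 1000000 in
/-- Proposition 1 (optimal denoising function).  Under the RCT setup with overlap and
unconfoundedness, the function `B*(x) = (1 − p(x))·μ1(x) + p(x)·μ0(x)` minimizes
`E[(Y·W − B(X)·W)²]` over all measurable functions `B` such that `B(X)·W` is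
square-integrable. -/
theorem optimal_denoising_function
    {Ω : Type} [mΩ : MeasurableSpace Ω] [StandardBorelSpace Ω] [Nonempty Ω]
    (μ : Measure Ω) [IsProbabilityMeasure μ]
    {d : ℕ} (X : Ω → (Fin d → ℝ)) (Y1 Y0 T : Ω → ℝ)
    (hX : Measurable X) (hY1 : Measurable Y1) (hY0 : Measurable Y0) (hT : Measurable T)
    -- binary treatment
    (hT01 : ∀ ω, T ω = 0 ∨ T ω = 1)
    -- known propensity score with overlap (Assumption 2)
    (ρ : (Fin d → ℝ) → ℝ) (hρ : Measurable ρ)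
    (ξ : ℝ) (hξ : 0 < ξ) (hover : ∀ x, ξ < ρ x ∧ ρ x < 1 - ξ)
    (hprop : μ[T | MeasurableSpace.comap X inferInstance] =ᵐ[μ] fun ω => ρ (X ω))
    -- unconfoundedness (Assumption 1)
    (hunconf : CondIndepFun (MeasurableSpace.comap X inferInstance) hX.comap_le
      T (fun ω => (Y1 ω, Y0 ω)) μ)
    -- integrable potential outcomes
    (hY1int : Integrable Y1 μ) (hY0int : Integrable Y0 μ)
    -- conditional mean functions μ1 and μ0
    (m1 m0 : (Fin d → ℝ) → ℝ) (hm1 : Measurable m1) (hm0 : Measurable m0)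
    (hm1eq : μ[Y1 | MeasurableSpace.comap X inferInstance] =ᵐ[μ] fun ω => m1 (X ω))
    (hm0eq : μ[Y0 | MeasurableSpace.comap X inferInstance] =ᵐ[μ] fun ω => m0 (X ω))
    -- observed outcome and IPW weight
    (Y : Ω → ℝ) (hY : Y = fun ω => T ω * Y1 ω + (1 - T ω) * Y0 ω)
    (W : Ω → ℝ)
    (hW : W = fun ω => (T ω - ρ (X ω)) / (ρ (X ω) * (1 - ρ (X ω))))
    -- the candidate optimal denoising function B*
    (Bstar : (Fin d → ℝ) → ℝ)
    (hBstar : Bstar = fun x => (1 - ρ x) * m1 x + ρ x * m0 x)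
    -- square-integrability of Y·W and B*(X)·W
    (hYW2 : Integrable (fun ω => (Y ω * W ω) ^ 2) μ)
    (hBstarW2 : Integrable (fun ω => (Bstar (X ω) * W ω) ^ 2) μ) :
    ∀ B : (Fin d → ℝ) → ℝ, Measurable B →
      Integrable (fun ω => (B (X ω) * W ω) ^ 2) μ →
      ∫ ω, (Y ω * W ω - Bstar (X ω) * W ω) ^ 2 ∂μ
        ≤ ∫ ω, (Y ω * W ω - B (X ω) * W ω) ^ 2 ∂μ := by
  intro B hB hBW2
  have hm : MeasurableSpace.comap X inferInstance ≤ mΩ := hX.comap_le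
  -- basic positivity facts
  have hρpos : ∀ x, 0 < ρ x := fun x => lt_trans hξ (hover x).1
  have hρlt1 : ∀ x, ρ x < 1 := fun x => by linarith [(hover x).2, hξ]
  have h1ρpos : ∀ x, 0 < 1 - ρ x := fun x => by linarith [hρlt1 x]
  have hξ1ρ : ∀ x, ξ < 1 - ρ x := fun x => by linarith [(hover x).2]
  -- bounds on W
  have hWabs : ∀ ω, |W ω| ≤ 1 / ξ ∧ 1 ≤ |W ω| := by
    intro ω
    have h1 : 0 < ρ (X ω) := hρpos _
    have h2 : 0 < 1 - ρ (X ω) := h1ρpos _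
    rcases hT01 ω with h | h
    · have e : W ω = -(1 / (1 - ρ (X ω))) := by
        rw [hW]; simp only [h]; field_simp; ring
      rw [e, abs_neg, abs_of_pos (by positivity)]
      constructor
      · apply div_le_div_of_nonneg_left zero_le_one hξ (hξ1ρ _).le
      · rw [le_div_iff₀ h2]; linarith [hρpos (X ω)]
    · have e : W ω = 1 / ρ (X ω) := by
        rw [hW]; simp only [h]; field_simp
      rw [e, abs_of_pos (by positivity)]
      constructor
      · apply div_le_div_of_nonneg_left zero_le_one hξ (hover _).1.le
      · rw [le_div_iff₀ h1]; linarith [hρlt1 (X ω)]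
  -- measurability
  have hYme : Measurable Y := by
    rw [hY]; exact (hT.mul hY1).add ((measurable_const.sub hT).mul hY0)
  have hWme : Measurable W := by
    rw [hW]
    exact (hT.sub (hρ.comp hX)).div ((hρ.comp hX).mul (measurable_const.sub (hρ.comp hX)))
  have hBstarme : Measurable Bstar := by
    rw [hBstar]; exact ((measurable_const.sub hρ).mul hm1).add (hρ.mul hm0)
  -- L² facts
  have hsq : ∀ {f : Ω → ℝ}, AEStronglyMeasurable f μ →
      Integrable (fun ω => (f ω * W ω) ^ 2) μ → Integrable (fun ω => f ω ^ 2) μ := by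
    intro f hf hint
    refine hint.mono' ((continuous_pow 2).comp_aestronglyMeasurable hf)
      (ae_of_all _ fun ω => ?_)
    rw [Real.norm_eq_abs, abs_of_nonneg (sq_nonneg _)]
    have h2 : 1 ≤ W ω ^ 2 := by nlinarith [(hWabs ω).2, abs_nonneg (W ω), sq_abs (W ω)]
    nlinarith [sq_nonneg (f ω), mul_nonneg (sq_nonneg (f ω)) (by linarith : (0:ℝ) ≤ W ω ^ 2 - 1)]
  have hY2 : Integrable (fun ω => Y ω ^ 2) μ := hsq hYme.aestronglyMeasurable hYW2
  have hBs2 : Integrable (fun ω => Bstar (X ω) ^ 2) μ :=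
    hsq (hBstarme.comp hX).aestronglyMeasurable hBstarW2
  have hB2 : Integrable (fun ω => B (X ω) ^ 2) μ := hsq (hB.comp hX).aestronglyMeasurable hBW2
  have hYint : Integrable Y μ := integrable_of_sq hYme.aestronglyMeasurable hY2
  have hg2 : Integrable (fun ω => (Bstar (X ω) - B (X ω)) ^ 2) μ := by
    have hbd : Integrable (fun ω => 2 * (Bstar (X ω) ^ 2 + B (X ω) ^ 2)) μ := by
      have := (hBs2.add hB2).const_mul 2
      simpa using this
    refine hbd.mono'
      (((continuous_pow 2).comp_aestronglyMeasurable
        (((hBstarme.comp hX).sub (hB.comp hX)).aestronglyMeasurable)))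
      (ae_of_all _ fun ω => ?_)
    rw [Real.norm_eq_abs, abs_of_nonneg (sq_nonneg _)]
    nlinarith [sq_nonneg (Bstar (X ω) + B (X ω))]
  have hgY : Integrable (fun ω => (Bstar (X ω) - B (X ω)) * Y ω) μ :=
    integrable_mul_of_sq (((hBstarme.comp hX).sub (hB.comp hX)).aestronglyMeasurable)
      hYme.aestronglyMeasurable hg2 hY2
  have hgBs : Integrable (fun ω => (Bstar (X ω) - B (X ω)) * Bstar (X ω)) μ :=
    integrable_mul_of_sq (((hBstarme.comp hX).sub (hB.comp hX)).aestronglyMeasurable)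
      (hBstarme.comp hX).aestronglyMeasurable hg2 hBs2
  -- bounds on the weight functions φ1 = g/ρ², φ0 = g/(1-ρ)²
  have hφ1abs : ∀ x, |(Bstar x - B x) / ρ x ^ 2| ≤ ξ⁻¹ ^ 2 * |Bstar x - B x| := by
    intro x
    rw [abs_div, abs_of_pos (pow_pos (hρpos x) 2), div_le_iff₀ (pow_pos (hρpos x) 2)]
    have h1 : ξ ^ 2 ≤ ρ x ^ 2 := pow_le_pow_left₀ hξ.le (hover x).1.le 2
    calc |Bstar x - B x| = ξ⁻¹ ^ 2 * |Bstar x - B x| * ξ ^ 2 := by field_simp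
      _ ≤ ξ⁻¹ ^ 2 * |Bstar x - B x| * ρ x ^ 2 := by
          refine mul_le_mul_of_nonneg_left h1 (by positivity)
  have hφ0abs : ∀ x, |(Bstar x - B x) / (1 - ρ x) ^ 2| ≤ ξ⁻¹ ^ 2 * |Bstar x - B x| := by
    intro x
    rw [abs_div, abs_of_pos (pow_pos (h1ρpos x) 2), div_le_iff₀ (pow_pos (h1ρpos x) 2)]
    have h1 : ξ ^ 2 ≤ (1 - ρ x) ^ 2 := pow_le_pow_left₀ hξ.le (hξ1ρ x).le 2
    calc |Bstar x - B x| = ξ⁻¹ ^ 2 * |Bstar x - B x| * ξ ^ 2 := by field_simp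
      _ ≤ ξ⁻¹ ^ 2 * |Bstar x - B x| * (1 - ρ x) ^ 2 := by
          refine mul_le_mul_of_nonneg_left h1 (by positivity)
  have hφ1me : Measurable (fun x => (Bstar x - B x) / ρ x ^ 2) :=
    (hBstarme.sub hB).div (hρ.pow_const 2)
  have hφ0me : Measurable (fun x => (Bstar x - B x) / (1 - ρ x) ^ 2) :=
    (hBstarme.sub hB).div ((measurable_const.sub hρ).pow_const 2)
  -- pointwise rewriting of T·Y1 and (1-T)·Y0 in terms of Y
  have hTY1Y : ∀ ω, T ω * Y1 ω = T ω * Y ω := by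
    intro ω; rcases hT01 ω with h | h <;> simp [hY, h]
  have h1TY0Y : ∀ ω, (1 - T ω) * Y0 ω = (1 - T ω) * Y ω := by
    intro ω; rcases hT01 ω with h | h <;> simp [hY, h]
  -- integrability of the four cross-term pieces
  have hTabs : ∀ ω, |T ω| ≤ 1 := fun ω => by rcases hT01 ω with h | h <;> simp [h]
  have h1Tabs : ∀ ω, |1 - T ω| ≤ 1 := fun ω => by rcases hT01 ω with h | h <;> simp [h]
  have hTint : Integrable T μ :=
    Integrable.mono' (integrable_const 1) hT.aestronglyMeasurable
      (ae_of_all _ fun ω => by rw [Real.norm_eq_abs]; exact hTabs ω)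
  have hTY1int : Integrable (fun ω => T ω * Y1 ω) μ := by
    refine hYint.norm.mono' ((hT.mul hY1).aestronglyMeasurable) (ae_of_all _ fun ω => ?_)
    simp only [Real.norm_eq_abs, hTY1Y ω, abs_mul]
    calc |T ω| * |Y ω| ≤ 1 * |Y ω| := mul_le_mul_of_nonneg_right (hTabs ω) (abs_nonneg _)
      _ = |Y ω| := one_mul _
  have hTY0int : Integrable (fun ω => T ω * Y0 ω) μ := by
    refine hY0int.norm.mono' ((hT.mul hY0).aestronglyMeasurable) (ae_of_all _ fun ω => ?_)
    simp only [Real.norm_eq_abs, abs_mul]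
    calc |T ω| * |Y0 ω| ≤ 1 * |Y0 ω| := mul_le_mul_of_nonneg_right (hTabs ω) (abs_nonneg _)
      _ = |Y0 ω| := one_mul _
  have h1TY0int : Integrable (fun ω => (1 - T ω) * Y0 ω) μ := by
    refine hY0int.norm.mono' (((measurable_const.sub hT).mul hY0).aestronglyMeasurable)
      (ae_of_all _ fun ω => ?_)
    simp only [Real.norm_eq_abs, abs_mul]
    calc |1 - T ω| * |Y0 ω| ≤ 1 * |Y0 ω| := mul_le_mul_of_nonneg_right (h1Tabs ω) (abs_nonneg _)
      _ = |Y0 ω| := one_mul _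
  have hF1int : Integrable (fun ω => (Bstar (X ω) - B (X ω)) / ρ (X ω) ^ 2 * (T ω * Y1 ω)) μ := by
    refine (hgY.norm.const_mul (ξ⁻¹ ^ 2)).mono'
      (((hφ1me.comp hX).mul (hT.mul hY1)).aestronglyMeasurable) (ae_of_all _ fun ω => ?_)
    rw [Real.norm_eq_abs, hTY1Y ω, abs_mul, abs_mul, Real.norm_eq_abs, abs_mul]
    calc |(Bstar (X ω) - B (X ω)) / ρ (X ω) ^ 2| * (|T ω| * |Y ω|)
        ≤ (ξ⁻¹ ^ 2 * |Bstar (X ω) - B (X ω)|) * (1 * |Y ω|) := by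
          refine mul_le_mul (hφ1abs _) ?_ (by positivity) (by positivity)
          exact mul_le_mul_of_nonneg_right (hTabs ω) (abs_nonneg _)
      _ = ξ⁻¹ ^ 2 * (|Bstar (X ω) - B (X ω)| * |Y ω|) := by ring
  have hF2int : Integrable
      (fun ω => (Bstar (X ω) - B (X ω)) / ρ (X ω) ^ 2 * Bstar (X ω) * T ω) μ := by
    refine (hgBs.norm.const_mul (ξ⁻¹ ^ 2)).mono'
      ((((hφ1me.comp hX).mul (hBstarme.comp hX)).mul hT).aestronglyMeasurable)
      (ae_of_all _ fun ω => ?_)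
    rw [Real.norm_eq_abs, abs_mul, abs_mul, Real.norm_eq_abs, abs_mul]
    calc |(Bstar (X ω) - B (X ω)) / ρ (X ω) ^ 2| * |Bstar (X ω)| * |T ω|
        ≤ (ξ⁻¹ ^ 2 * |Bstar (X ω) - B (X ω)|) * |Bstar (X ω)| * 1 := by
          refine mul_le_mul (mul_le_mul_of_nonneg_right (hφ1abs _) (abs_nonneg _)) (hTabs ω)
            (abs_nonneg _) (by positivity)
      _ = ξ⁻¹ ^ 2 * (|Bstar (X ω) - B (X ω)| * |Bstar (X ω)|) := by ring
  have hF3int : Integrable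
      (fun ω => (Bstar (X ω) - B (X ω)) / (1 - ρ (X ω)) ^ 2 * ((1 - T ω) * Y0 ω)) μ := by
    refine (hgY.norm.const_mul (ξ⁻¹ ^ 2)).mono'
      (((hφ0me.comp hX).mul ((measurable_const.sub hT).mul hY0)).aestronglyMeasurable)
      (ae_of_all _ fun ω => ?_)
    rw [Real.norm_eq_abs, h1TY0Y ω, abs_mul, abs_mul, Real.norm_eq_abs, abs_mul]
    calc |(Bstar (X ω) - B (X ω)) / (1 - ρ (X ω)) ^ 2| * (|1 - T ω| * |Y ω|)
        ≤ (ξ⁻¹ ^ 2 * |Bstar (X ω) - B (X ω)|) * (1 * |Y ω|) := by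
          refine mul_le_mul (hφ0abs _) ?_ (by positivity) (by positivity)
          exact mul_le_mul_of_nonneg_right (h1Tabs ω) (abs_nonneg _)
      _ = ξ⁻¹ ^ 2 * (|Bstar (X ω) - B (X ω)| * |Y ω|) := by ring
  have hF4int : Integrable
      (fun ω => (Bstar (X ω) - B (X ω)) / (1 - ρ (X ω)) ^ 2 * Bstar (X ω) * (1 - T ω)) μ := by
    refine (hgBs.norm.const_mul (ξ⁻¹ ^ 2)).mono'
      ((((hφ0me.comp hX).mul (hBstarme.comp hX)).mul (measurable_const.sub hT)).aestronglyMeasurable)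
      (ae_of_all _ fun ω => ?_)
    rw [Real.norm_eq_abs, abs_mul, abs_mul, Real.norm_eq_abs, abs_mul]
    calc |(Bstar (X ω) - B (X ω)) / (1 - ρ (X ω)) ^ 2| * |Bstar (X ω)| * |1 - T ω|
        ≤ (ξ⁻¹ ^ 2 * |Bstar (X ω) - B (X ω)|) * |Bstar (X ω)| * 1 := by
          refine mul_le_mul (mul_le_mul_of_nonneg_right (hφ0abs _) (abs_nonneg _)) (h1Tabs ω)
            (abs_nonneg _) (by positivity)
      _ = ξ⁻¹ ^ 2 * (|Bstar (X ω) - B (X ω)| * |Bstar (X ω)|) := by ring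
  -- conditional expectation identities
  have hindep1 : CondIndepFun (MeasurableSpace.comap X inferInstance) hX.comap_le T Y1 μ :=
    hunconf.comp measurable_id measurable_fst
  have hindep0 : CondIndepFun (MeasurableSpace.comap X inferInstance) hX.comap_le T Y0 μ :=
    hunconf.comp measurable_id measurable_snd
  have hTY1' : μ[fun ω => T ω * Y1 ω|MeasurableSpace.comap X inferInstance]
      =ᵐ[μ] fun ω => ρ (X ω) * m1 (X ω) := by
    filter_upwards [condexp_mul_binary μ hm hT hY1 hT01 hY1int hindep1, hprop, hm1eq]
      with ω h1 h2 h3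
    rw [h1, h2, h3]
  have hTY0' : μ[fun ω => T ω * Y0 ω|MeasurableSpace.comap X inferInstance]
      =ᵐ[μ] fun ω => ρ (X ω) * m0 (X ω) := by
    filter_upwards [condexp_mul_binary μ hm hT hY0 hT01 hY0int hindep0, hprop, hm0eq]
      with ω h1 h2 h3
    rw [h1, h2, h3]
  have h1TY0' : μ[fun ω => (1 - T ω) * Y0 ω|MeasurableSpace.comap X inferInstance]
      =ᵐ[μ] fun ω => (1 - ρ (X ω)) * m0 (X ω) := by
    have e : (fun ω => (1 - T ω) * Y0 ω) = Y0 - fun ω => T ω * Y0 ω := by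
      funext ω; simp [Pi.sub_apply]; ring
    rw [e]
    filter_upwards [condExp_sub hY0int hTY0int
      (m := MeasurableSpace.comap X inferInstance), hm0eq, hTY0'] with ω h1 h2 h3
    rw [h1, Pi.sub_apply, h2, h3]; ring
  have h1T' : μ[fun ω => 1 - T ω|MeasurableSpace.comap X inferInstance]
      =ᵐ[μ] fun ω => 1 - ρ (X ω) := by
    have e : (fun ω => 1 - T ω) = (fun _ => (1:ℝ)) - T := rfl
    rw [e]
    filter_upwards [condExp_sub (integrable_const 1) hTint
      (m := MeasurableSpace.comap X inferInstance), hprop] with ω h1 h2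
    rw [h1, Pi.sub_apply, condExp_const hm, h2]
  -- the tower-property evaluation lemma
  have key : ∀ (ψ : (Fin d → ℝ) → ℝ), Measurable ψ → ∀ (h : Ω → ℝ), Integrable h μ →
      Integrable (fun ω => ψ (X ω) * h ω) μ → ∀ (r : (Fin d → ℝ) → ℝ),
      (μ[h|MeasurableSpace.comap X inferInstance] =ᵐ[μ] fun ω => r (X ω)) →
      (∫ ω, ψ (X ω) * h ω ∂μ = ∫ ω, ψ (X ω) * r (X ω) ∂μ) ∧
        Integrable (fun ω => ψ (X ω) * r (X ω)) μ := by
    intro ψ hψ h hint hψh r hr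
    have hXm : Measurable[MeasurableSpace.comap X inferInstance] X :=
      measurable_iff_comap_le.mpr le_rfl
    have hsm : StronglyMeasurable[MeasurableSpace.comap X inferInstance]
        (fun ω => ψ (X ω)) := (hψ.comp hXm).stronglyMeasurable
    have hpull : μ[(fun ω => ψ (X ω)) * h|MeasurableSpace.comap X inferInstance]
        =ᵐ[μ] (fun ω => ψ (X ω)) * μ[h|MeasurableSpace.comap X inferInstance] :=
      condExp_mul_of_stronglyMeasurable_left hsm hψh hint
    have h2 : (fun ω => ψ (X ω)) * μ[h|MeasurableSpace.comap X inferInstance]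
        =ᵐ[μ] fun ω => ψ (X ω) * r (X ω) := by
      filter_upwards [hr] with ω hω
      rw [Pi.mul_apply, hω]
    have hic : Integrable
        (μ[(fun ω => ψ (X ω)) * h|MeasurableSpace.comap X inferInstance]) μ :=
      integrable_condExp
    refine ⟨?_, hic.congr (hpull.trans h2)⟩
    calc ∫ ω, ψ (X ω) * h ω ∂μ = ∫ ω, ((fun ω => ψ (X ω)) * h) ω ∂μ := rfl
      _ = ∫ ω, (μ[(fun ω => ψ (X ω)) * h|MeasurableSpace.comap X inferInstance]) ω ∂μ :=
          (integral_condExp hm).symm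
      _ = ∫ ω, ψ (X ω) * r (X ω) ∂μ := integral_congr_ae (hpull.trans h2)
  have k1 := key (fun x => (Bstar x - B x) / ρ x ^ 2) hφ1me (fun ω => T ω * Y1 ω)
    hTY1int hF1int (fun x => ρ x * m1 x) hTY1'
  have k2 := key (fun x => (Bstar x - B x) / ρ x ^ 2 * Bstar x) (hφ1me.mul hBstarme) T
    hTint hF2int ρ hprop
  have k3 := key (fun x => (Bstar x - B x) / (1 - ρ x) ^ 2) hφ0me
    (fun ω => (1 - T ω) * Y0 ω) h1TY0int hF3int (fun x => (1 - ρ x) * m0 x) h1TY0'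
  have k4 := key (fun x => (Bstar x - B x) / (1 - ρ x) ^ 2 * Bstar x) (hφ0me.mul hBstarme)
    (fun ω => 1 - T ω) ((integrable_const 1).sub hTint) hF4int (fun x => 1 - ρ x) h1T'
  -- restated evaluations (beta-reduced forms)
  have k1e : ∫ ω, (Bstar (X ω) - B (X ω)) / ρ (X ω) ^ 2 * (T ω * Y1 ω) ∂μ
      = ∫ ω, (Bstar (X ω) - B (X ω)) / ρ (X ω) ^ 2 * (ρ (X ω) * m1 (X ω)) ∂μ := k1.1
  have k1i : Integrable
      (fun ω => (Bstar (X ω) - B (X ω)) / ρ (X ω) ^ 2 * (ρ (X ω) * m1 (X ω))) μ := k1.2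
  have k2e : ∫ ω, (Bstar (X ω) - B (X ω)) / ρ (X ω) ^ 2 * Bstar (X ω) * T ω ∂μ
      = ∫ ω, (Bstar (X ω) - B (X ω)) / ρ (X ω) ^ 2 * Bstar (X ω) * ρ (X ω) ∂μ := k2.1
  have k2i : Integrable
      (fun ω => (Bstar (X ω) - B (X ω)) / ρ (X ω) ^ 2 * Bstar (X ω) * ρ (X ω)) μ := k2.2
  have k3e : ∫ ω, (Bstar (X ω) - B (X ω)) / (1 - ρ (X ω)) ^ 2 * ((1 - T ω) * Y0 ω) ∂μ
      = ∫ ω, (Bstar (X ω) - B (X ω)) / (1 - ρ (X ω)) ^ 2 * ((1 - ρ (X ω)) * m0 (X ω)) ∂μ :=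
    k3.1
  have k3i : Integrable
      (fun ω => (Bstar (X ω) - B (X ω)) / (1 - ρ (X ω)) ^ 2 * ((1 - ρ (X ω)) * m0 (X ω))) μ :=
    k3.2
  have k4e : ∫ ω, (Bstar (X ω) - B (X ω)) / (1 - ρ (X ω)) ^ 2 * Bstar (X ω) * (1 - T ω) ∂μ
      = ∫ ω, (Bstar (X ω) - B (X ω)) / (1 - ρ (X ω)) ^ 2 * Bstar (X ω) * (1 - ρ (X ω)) ∂μ :=
    k4.1
  have k4i : Integrable
      (fun ω => (Bstar (X ω) - B (X ω)) / (1 - ρ (X ω)) ^ 2 * Bstar (X ω) * (1 - ρ (X ω))) μ :=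
    k4.2
  -- the cross term vanishes
  have hpt : ∀ ω, (Y ω * W ω - Bstar (X ω) * W ω) * ((Bstar (X ω) - B (X ω)) * W ω)
      = (Bstar (X ω) - B (X ω)) / ρ (X ω) ^ 2 * (T ω * Y1 ω)
        - (Bstar (X ω) - B (X ω)) / ρ (X ω) ^ 2 * Bstar (X ω) * T ω
        + ((Bstar (X ω) - B (X ω)) / (1 - ρ (X ω)) ^ 2 * ((1 - T ω) * Y0 ω)
          - (Bstar (X ω) - B (X ω)) / (1 - ρ (X ω)) ^ 2 * Bstar (X ω) * (1 - T ω)) := by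
    intro ω
    have hr0 : ρ (X ω) ≠ 0 := (hρpos _).ne'
    have hr1 : (1 : ℝ) - ρ (X ω) ≠ 0 := (h1ρpos _).ne'
    rcases hT01 ω with h | h <;>
      · simp only [hY, hW, h]
        field_simp
        ring
  have hzero : ∀ ω, (Bstar (X ω) - B (X ω)) / ρ (X ω) ^ 2 * (ρ (X ω) * m1 (X ω))
      - (Bstar (X ω) - B (X ω)) / ρ (X ω) ^ 2 * Bstar (X ω) * ρ (X ω)
      + ((Bstar (X ω) - B (X ω)) / (1 - ρ (X ω)) ^ 2 * ((1 - ρ (X ω)) * m0 (X ω))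
        - (Bstar (X ω) - B (X ω)) / (1 - ρ (X ω)) ^ 2 * Bstar (X ω) * (1 - ρ (X ω)))
      = 0 := by
    intro ω
    have hr0 : ρ (X ω) ≠ 0 := (hρpos _).ne'
    have hr1 : (1 : ℝ) - ρ (X ω) ≠ 0 := (h1ρpos _).ne'
    rw [hBstar]
    field_simp
    ring
  have hcross : ∫ ω, (Y ω * W ω - Bstar (X ω) * W ω) * ((Bstar (X ω) - B (X ω)) * W ω) ∂μ
      = 0 := by
    calc ∫ ω, (Y ω * W ω - Bstar (X ω) * W ω) * ((Bstar (X ω) - B (X ω)) * W ω) ∂μ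
        = ∫ ω, ((Bstar (X ω) - B (X ω)) / ρ (X ω) ^ 2 * (T ω * Y1 ω)
            - (Bstar (X ω) - B (X ω)) / ρ (X ω) ^ 2 * Bstar (X ω) * T ω
            + ((Bstar (X ω) - B (X ω)) / (1 - ρ (X ω)) ^ 2 * ((1 - T ω) * Y0 ω)
              - (Bstar (X ω) - B (X ω)) / (1 - ρ (X ω)) ^ 2 * Bstar (X ω) * (1 - T ω))) ∂μ :=
          integral_congr_ae (ae_of_all _ hpt)
      _ = 0 := by
          have h12 : Integrable (fun ω => (Bstar (X ω) - B (X ω)) / ρ (X ω) ^ 2 * (T ω * Y1 ω)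
              - (Bstar (X ω) - B (X ω)) / ρ (X ω) ^ 2 * Bstar (X ω) * T ω) μ :=
            hF1int.sub hF2int
          have h34 : Integrable
              (fun ω => (Bstar (X ω) - B (X ω)) / (1 - ρ (X ω)) ^ 2 * ((1 - T ω) * Y0 ω)
              - (Bstar (X ω) - B (X ω)) / (1 - ρ (X ω)) ^ 2 * Bstar (X ω) * (1 - T ω)) μ :=
            hF3int.sub hF4int
          have k12 : Integrable
              (fun ω => (Bstar (X ω) - B (X ω)) / ρ (X ω) ^ 2 * (ρ (X ω) * m1 (X ω))
              - (Bstar (X ω) - B (X ω)) / ρ (X ω) ^ 2 * Bstar (X ω) * ρ (X ω)) μ :=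
            k1i.sub k2i
          have k34 : Integrable
              (fun ω => (Bstar (X ω) - B (X ω)) / (1 - ρ (X ω)) ^ 2 * ((1 - ρ (X ω)) * m0 (X ω))
              - (Bstar (X ω) - B (X ω)) / (1 - ρ (X ω)) ^ 2 * Bstar (X ω) * (1 - ρ (X ω))) μ :=
            k3i.sub k4i
          rw [integral_add h12 h34,
            integral_sub hF1int hF2int, integral_sub hF3int hF4int, k1e, k2e, k3e, k4e,
            ← integral_sub k1i k2i, ← integral_sub k3i k4i,
            ← integral_add k12 k34]
          rw [show (fun ω => (Bstar (X ω) - B (X ω)) / ρ (X ω) ^ 2 * (ρ (X ω) * m1 (X ω))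
              - (Bstar (X ω) - B (X ω)) / ρ (X ω) ^ 2 * Bstar (X ω) * ρ (X ω)
              + ((Bstar (X ω) - B (X ω)) / (1 - ρ (X ω)) ^ 2 * ((1 - ρ (X ω)) * m0 (X ω))
                - (Bstar (X ω) - B (X ω)) / (1 - ρ (X ω)) ^ 2 * Bstar (X ω) * (1 - ρ (X ω))))
              = fun _ => (0:ℝ) from funext hzero]
          simp
  -- final assembly
  have hR2 : Integrable (fun ω => (Y ω * W ω - Bstar (X ω) * W ω) ^ 2) μ := by
    have hbd : Integrable (fun ω => 2 * ((Y ω * W ω) ^ 2 + (Bstar (X ω) * W ω) ^ 2)) μ := by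
      simpa using (hYW2.add hBstarW2).const_mul 2
    refine hbd.mono' ((continuous_pow 2).comp_aestronglyMeasurable
      (((hYme.mul hWme).sub ((hBstarme.comp hX).mul hWme)).aestronglyMeasurable))
      (ae_of_all _ fun ω => ?_)
    rw [Real.norm_eq_abs, abs_of_nonneg (sq_nonneg _)]
    nlinarith [sq_nonneg (Y ω * W ω + Bstar (X ω) * W ω)]
  have hG2 : Integrable (fun ω => ((Bstar (X ω) - B (X ω)) * W ω) ^ 2) μ := by
    have hbd : Integrable
        (fun ω => 2 * ((Bstar (X ω) * W ω) ^ 2 + (B (X ω) * W ω) ^ 2)) μ := by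
      simpa using (hBstarW2.add hBW2).const_mul 2
    refine hbd.mono' ((continuous_pow 2).comp_aestronglyMeasurable
      ((((hBstarme.comp hX).sub (hB.comp hX)).mul hWme).aestronglyMeasurable))
      (ae_of_all _ fun ω => ?_)
    rw [Real.norm_eq_abs, abs_of_nonneg (sq_nonneg _)]
    nlinarith [sq_nonneg (Bstar (X ω) * W ω + B (X ω) * W ω)]
  have hRGint : Integrable (fun ω => (Y ω * W ω - Bstar (X ω) * W ω)
      * ((Bstar (X ω) - B (X ω)) * W ω)) μ :=
    integrable_mul_of_sq
      (((hYme.mul hWme).sub ((hBstarme.comp hX).mul hWme)).aestronglyMeasurable)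
      ((((hBstarme.comp hX).sub (hB.comp hX)).mul hWme).aestronglyMeasurable) hR2 hG2
  have hdec : (fun ω => (Y ω * W ω - B (X ω) * W ω) ^ 2)
      = fun ω => (Y ω * W ω - Bstar (X ω) * W ω) ^ 2
        + (2 * ((Y ω * W ω - Bstar (X ω) * W ω) * ((Bstar (X ω) - B (X ω)) * W ω))
          + ((Bstar (X ω) - B (X ω)) * W ω) ^ 2) := by
    funext ω; ring
  have hcg : Integrable (fun ω => 2 * ((Y ω * W ω - Bstar (X ω) * W ω)
      * ((Bstar (X ω) - B (X ω)) * W ω)) + ((Bstar (X ω) - B (X ω)) * W ω) ^ 2) μ :=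
    (hRGint.const_mul 2).add hG2
  rw [hdec, integral_add hR2 hcg, integral_add (hRGint.const_mul 2) hG2,
    integral_const_mul, hcross]
  have hG2nonneg : 0 ≤ ∫ ω, ((Bstar (X ω) - B (X ω)) * W ω) ^ 2 ∂μ :=
    integral_nonneg fun ω => sq_nonneg _
  linarith
end

section
/- (Deterministic Lasso prediction bound, equation (9).) Let X ∈ ℝ^{n×p}, y ∈ ℝ^n, β ∈ ℝ^p, e = y − X·β, and let β̃ be any minimizer over b ∈ ℝ^p of (1/(2n))·‖y − X·b‖₂² + λ·‖b‖₁. If ‖(1/n)·X'·e‖∞ ≤ λ₀ and λ ≥ λ₀, then (1/n)·‖X·β̃ − X·β‖₂² ≤ 4·λ·‖β‖₁. -/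
open Matrix

/-- The ℓ₁ norm on `ℝ^p`. -/
noncomputable def l1norm {p : ℕ} (v : Fin p → ℝ) : ℝ := ∑ j, |v j|

/-- The squared Euclidean norm on `ℝ^n`. -/
noncomputable def l2normSq {n : ℕ} (v : Fin n → ℝ) : ℝ := ∑ i, (v i) ^ 2

/-- The ℓ∞ norm on `ℝ^p`. -/
noncomputable def linftyNorm {p : ℕ} (v : Fin p → ℝ) : ℝ := ⨆ j, |v j|

lemma l1norm_nonneg {p : ℕ} (v : Fin p → ℝ) : 0 ≤ l1norm v :=
  Finset.sum_nonneg fun _ _ => abs_nonneg _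

lemma l1norm_sub_le {p : ℕ} (a b : Fin p → ℝ) :
    l1norm (a - b) ≤ l1norm a + l1norm b := by
  unfold l1norm
  rw [← Finset.sum_add_distrib]
  exact Finset.sum_le_sum fun j _ => abs_sub (a j) (b j)

lemma abs_le_linftyNorm {p : ℕ} (hp : 0 < p) (v : Fin p → ℝ) (j : Fin p) :
    |v j| ≤ linftyNorm v := by
  have : Nonempty (Fin p) := ⟨⟨0, hp⟩⟩
  exact le_ciSup (f := fun j => |v j|) (Set.Finite.bddAbove (Set.finite_range _)) j

lemma dot_le {p : ℕ} (hp : 0 < p) (u v : Fin p → ℝ) (C : ℝ)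
    (hC : linftyNorm u ≤ C) : u ⬝ᵥ v ≤ C * l1norm v := by
  calc u ⬝ᵥ v ≤ ∑ j, |u j * v j| :=
        Finset.sum_le_sum fun j _ => le_abs_self _
    _ ≤ ∑ j, C * |v j| := by
        refine Finset.sum_le_sum fun j _ => ?_
        rw [abs_mul]
        exact mul_le_mul_of_nonneg_right ((abs_le_linftyNorm hp u j).trans hC) (abs_nonneg _)
    _ = C * l1norm v := by rw [l1norm, Finset.mul_sum]

/-- Deterministic Lasso prediction bound (equation (9)): if `‖(1/n)X'e‖∞ ≤ λ₀` and
`λ ≥ λ₀`, then any Lasso minimizer `β̃` satisfies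
`(1/n)‖X·β̃ − X·β‖₂² ≤ 4λ‖β‖₁`. -/
theorem lasso_prediction_bound {n p : ℕ} (hn : 0 < n) (hp : 0 < p)
    (X : Matrix (Fin n) (Fin p) ℝ) (y : Fin n → ℝ) (β : Fin p → ℝ)
    (e : Fin n → ℝ) (he : e = y - X.mulVec β)
    (lam lam0 : ℝ) (hlam0 : 0 ≤ lam0) (hlam : lam0 ≤ lam)
    (hnoise : linftyNorm ((1 / (n : ℝ)) • Xᵀ.mulVec e) ≤ lam0)
    (βt : Fin p → ℝ)
    (hmin : ∀ b : Fin p → ℝ,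
      1 / (2 * (n : ℝ)) * l2normSq (y - X.mulVec βt) + lam * l1norm βt
        ≤ 1 / (2 * (n : ℝ)) * l2normSq (y - X.mulVec b) + lam * l1norm b) :
    1 / (n : ℝ) * l2normSq (X.mulVec βt - X.mulVec β) ≤ 4 * lam * l1norm β := by
  have hnR : (0:ℝ) < n := by exact_mod_cast hn
  have hne : (n:ℝ) ≠ 0 := ne_of_gt hnR
  set d : Fin n → ℝ := X.mulVec βt - X.mulVec β with hd
  have hyd : y - X.mulVec βt = e - d := by
    rw [he, hd]; abel
  set c : ℝ := 1 / (2 * (n : ℝ)) with hc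
  set E := l2normSq e
  set A := l2normSq d
  set S := e ⬝ᵥ d
  set T := l1norm βt
  set B := l1norm β
  have hexp : l2normSq (e - d) = E - 2 * S + A := by
    have h1 : ∀ i, (e i - d i)^2 = e i^2 - 2*(e i * d i) + d i ^2 := fun i => by ring
    simp only [l2normSq, dotProduct, Pi.sub_apply, h1, Finset.sum_add_distrib,
      Finset.sum_sub_distrib, ← Finset.mul_sum]
    rfl
  have hEy : y - X.mulVec β = e := he.symm
  have hmin2 : c * E - 2 * (c * S) + c * A + lam * T ≤ c * E + lam * B := by
    have h := hmin β
    rw [hyd, hexp, hEy] at h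
    calc c * E - 2 * (c * S) + c * A + lam * T = c * (E - 2 * S + A) + lam * T := by ring
      _ ≤ c * E + lam * B := h
  -- bound S
  have hSd : S = (Xᵀ.mulVec e) ⬝ᵥ (βt - β) := by
    show e ⬝ᵥ d = _
    rw [hd, ← Matrix.mulVec_sub, Matrix.dotProduct_mulVec, ← Matrix.mulVec_transpose]
  have hnoise' : linftyNorm ((1 / (n : ℝ)) • Xᵀ.mulVec e) ≤ lam0 := hnoise
  have hS : (1 / (n:ℝ)) * S ≤ lam0 * l1norm (βt - β) := by
    have := dot_le hp ((1 / (n : ℝ)) • Xᵀ.mulVec e) (βt - β) lam0 hnoise'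
    calc (1 / (n:ℝ)) * S = ((1 / (n : ℝ)) • Xᵀ.mulVec e) ⬝ᵥ (βt - β) := by
          rw [hSd, smul_dotProduct, smul_eq_mul]
      _ ≤ lam0 * l1norm (βt - β) := this
  have htri : l1norm (βt - β) ≤ T + B := l1norm_sub_le βt β
  have hl1nn : 0 ≤ l1norm (βt - β) := l1norm_nonneg _
  have hS2 : lam0 * l1norm (βt - β) ≤ lam * (T + B) := by
    calc lam0 * l1norm (βt - β) ≤ lam * l1norm (βt - β) :=
          mul_le_mul_of_nonneg_right hlam hl1nn
      _ ≤ lam * (T + B) := mul_le_mul_of_nonneg_left htri (hlam0.trans hlam)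
  have h2cS : 2 * (c * S) = (1 / (n:ℝ)) * S := by
    rw [hc]; field_simp
  have hcA : c * A ≤ 2 * lam * B := by
    have := hS.trans hS2
    rw [← h2cS] at this
    linarith
  have hfin : (1 / (n:ℝ)) * A = 2 * (c * A) := by
    rw [hc]; field_simp
  rw [hfin]
  linarith
end
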